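/- arXiv:1603.07783 — 2 statements merged into one kernel-verified Lean document; each statement's English description precedes it below -/
import Mathlib

section
/- Let X be a closed subspace of a real Hilbert space Y and let R : Y → Y be a bounded linear operator. Then ⟨u, R u⟩ ≤ 0 for all u ∈ X if and only if there exist bounded linear operators M, T : Y → Y such that R = M + T, ⟨w, M w⟩ ≤ 0 for all w ∈ Y, and ⟨u, T u⟩ = 0 for all u ∈ X. -/
open RealInnerProductSpace

theorem negativity_on_subspace_decomposition
    {Y : Type*} [NormedAddCommGroup Y] [InnerProductSpace ℝ Y] [CompleteSpace Y]
    (X : Submodule ℝ Y) (hX : IsClosed (X : Set Y)) (R : Y →L[ℝ] Y) :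
    (∀ u ∈ X, ⟪u, R u⟫ ≤ 0) ↔
      ∃ M T : Y →L[ℝ] Y, R = M + T ∧ (∀ w : Y, ⟪w, M w⟫ ≤ 0) ∧
        ∀ u ∈ X, ⟪u, T u⟫ = 0 := by
  haveI : CompleteSpace X := hX.completeSpace_coe
  constructor
  · intro h
    set P : Y →L[ℝ] Y := X.subtypeL.comp X.orthogonalProjectionOnto with hP
    have hPmem : ∀ w : Y, P w ∈ X := fun w => (X.orthogonalProjectionOnto w).2
    have hPsa : ∀ v w : Y, ⟪P v, w⟫ = ⟪v, P w⟫ := fun v w =>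
      X.inner_starProjection_left_eq_right v w
    have hPid : ∀ u ∈ X, P u = u := fun u hu => by
      exact Submodule.starProjection_eq_self_iff.mpr hu
    refine ⟨P.comp (R.comp P), R - P.comp (R.comp P), by abel, ?_, ?_⟩
    · intro w
      have : ⟪w, P (R (P w))⟫ = ⟪P w, R (P w)⟫ := (hPsa w _).symm
      simp only [ContinuousLinearMap.comp_apply]
      rw [this]
      exact h _ (hPmem w)
    · intro u hu
      simp only [ContinuousLinearMap.sub_apply, ContinuousLinearMap.comp_apply,
        inner_sub_right]
      rw [← hPsa, hPid u hu]
      ring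
  · rintro ⟨M, T, hR, hM, hT⟩ u hu
    rw [hR]
    simp only [ContinuousLinearMap.add_apply, inner_add_right]
    have := hT u hu
    linarith [hM u]
end

section
/- Let Z₁ : [a,b] → ℝ^{k×n} and Z₂ : [a,b]×[a,b] → ℝ^{m×n} be continuous matrix-valued functions, and let P be a positive semidefinite real symmetric (k+m)×(k+m) matrix partitioned into blocks P₁₁ ∈ ℝ^{k×k}, P₁₂ ∈ ℝ^{k×m}, P₂₁ = P₁₂ᵀ, P₂₂ ∈ ℝ^{m×m}. For ε > 0 define M(x) = Z₁(x)ᵀ P₁₁ Z₁(x) + ε Iₙ and N(x,y) = Z₁(x)ᵀ P₁₂ Z₂(x,y) + Z₂(y,x)ᵀ P₂₁ Z₁(y) + ∫ₐᵇ Z₂(z,x)ᵀ P₂₂ Z₂(z,y) dz. Then for every w ∈ L²((a,b), ℝⁿ), the functional V(w) = ∫ₐᵇ w(x)ᵀ M(x) w(x) dx + ∫ₐᵇ∫ₐᵇ w(x)ᵀ N(x,y) w(y) dy dx satisfies V(w) ≥ ε ‖w‖²_{L²}. -/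
open MeasureTheory Matrix

attribute [local instance] Matrix.normedAddCommGroup Matrix.normedSpace

namespace SOSaux

variable {α : Type*} [MeasurableSpace α] {μ : Measure α}

lemma dot_expand {k m : ℕ} (u : Fin k → ℝ) (A : Matrix (Fin k) (Fin m) ℝ) (v : Fin m → ℝ) :
    u ⬝ᵥ A *ᵥ v = ∑ i, ∑ j, u i * (A i j * v j) := by
  simp [dotProduct, mulVec, Finset.mul_sum]

lemma sandwich {n k k' n' : ℕ} (A : Matrix (Fin k) (Fin n) ℝ) (B : Matrix (Fin k) (Fin k') ℝ)
    (C : Matrix (Fin k') (Fin n') ℝ) (u : Fin n → ℝ) (v : Fin n' → ℝ) :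
    u ⬝ᵥ (Aᵀ * B * C) *ᵥ v = (A *ᵥ u) ⬝ᵥ B *ᵥ (C *ᵥ v) := by
  simp [Matrix.dotProduct_mulVec, ← Matrix.vecMul_vecMul, Matrix.vecMul_transpose]

lemma quadnn {k m : ℕ} {P₁₁ : Matrix (Fin k) (Fin k) ℝ} {P₁₂ : Matrix (Fin k) (Fin m) ℝ}
    {P₂₂ : Matrix (Fin m) (Fin m) ℝ}
    (hP : (Matrix.fromBlocks P₁₁ P₁₂ P₁₂ᵀ P₂₂).PosSemidef) (u : Fin k → ℝ) (v : Fin m → ℝ) :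
    0 ≤ u ⬝ᵥ P₁₁ *ᵥ u + u ⬝ᵥ P₁₂ *ᵥ v + (v ⬝ᵥ P₁₂ᵀ *ᵥ u + v ⬝ᵥ P₂₂ *ᵥ v) := by
  have := hP.dotProduct_mulVec_nonneg (Sum.elim u v)
  simpa [Matrix.fromBlocks_mulVec, sumElim_dotProduct_sumElim, dotProduct_add,
    add_assoc] using this

lemma mulL2 {f g : α → ℝ} (hf : MemLp f 2 μ) (hg : MemLp g 2 μ) :
    Integrable (fun x => f x * g x) μ := by
  have h : MemLp (f • g) 1 μ := hg.smul hf
  exact memLp_one_iff_integrable.mp h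

lemma bddMulMemℒp {φ f : α → ℝ} (hφ : AEStronglyMeasurable φ μ) {C : ℝ}
    (hb : ∀ᵐ x ∂μ, ‖φ x‖ ≤ C) (hf : MemLp f 2 μ) : MemLp (fun x => φ x * f x) 2 μ := by
  have hphi : MemLp φ ⊤ μ := memLp_top_of_bound hφ C hb
  have h := hf.smul hphi (r := 2)
  exact h

instance matrixCENorm {m' n' : ℕ} : ContinuousENorm (Matrix (Fin m') (Fin n') ℝ) :=
  SeminormedAddGroup.toContinuousENorm

lemma matrix_integral_apply {m' n' : ℕ} (ν : Measure α)
    (f : α → Matrix (Fin m') (Fin n') ℝ) (hf : Integrable f ν) (i : Fin m') (j : Fin n') :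
    (∫ x, f x ∂ν) i j = ∫ x, f x i j ∂ν := by
  let L : Matrix (Fin m') (Fin n') ℝ →L[ℝ] ℝ :=
    (ContinuousLinearMap.proj (R := ℝ) (φ := fun _ : Fin n' => ℝ) j).comp
      (ContinuousLinearMap.proj (R := ℝ) (φ := fun _ : Fin m' => Fin n' → ℝ) i)
  exact (L.integral_comp_comm hf).symm

lemma intDot {k m : ℕ} {f : α → Fin k → ℝ} {g : α → Fin m → ℝ}
    (A : Matrix (Fin k) (Fin m) ℝ) (hf : ∀ i, MemLp (fun x => f x i) 2 μ)
    (hg : ∀ j, MemLp (fun x => g x j) 2 μ) :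
    Integrable (fun x => f x ⬝ᵥ A *ᵥ g x) μ := by
  simp only [dot_expand]
  exact integrable_finset_sum _ fun i _ => integrable_finset_sum _ fun j _ =>
    mulL2 (hf i) ((hg j).const_mul (A i j))

lemma aesm_dot {k m : ℕ} {f : α → Fin k → ℝ} {g : α → Fin m → ℝ}
    (A : Matrix (Fin k) (Fin m) ℝ) (hf : ∀ i, AEStronglyMeasurable (fun x => f x i) μ)
    (hg : ∀ j, AEStronglyMeasurable (fun x => g x j) μ) :
    AEStronglyMeasurable (fun x => f x ⬝ᵥ A *ᵥ g x) μ := by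
  simp only [dot_expand]
  exact Finset.aestronglyMeasurable_fun_sum _ fun i _ =>
    Finset.aestronglyMeasurable_fun_sum _ fun j _ => (hf i).mul ((hg j).const_mul (A i j))

lemma abs_dot_le {k m : ℕ} (A : Matrix (Fin k) (Fin m) ℝ) (u : Fin k → ℝ) (v : Fin m → ℝ)
    {cu cv : ℝ} (hu : ∀ i, |u i| ≤ cu) (hv : ∀ j, |v j| ≤ cv) (hcu : 0 ≤ cu) (hcv : 0 ≤ cv) :
    |u ⬝ᵥ A *ᵥ v| ≤ (∑ i, ∑ j, |A i j|) * (cu * cv) := by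
  rw [dot_expand, Finset.sum_mul]
  refine (Finset.abs_sum_le_sum_abs _ _).trans (Finset.sum_le_sum fun i _ => ?_)
  rw [Finset.sum_mul]
  refine (Finset.abs_sum_le_sum_abs _ _).trans (Finset.sum_le_sum fun j _ => ?_)
  rw [abs_mul, abs_mul]
  calc |u i| * (|A i j| * |v j|) = |A i j| * (|u i| * |v j|) := by ring
    _ ≤ |A i j| * (cu * cv) := by
        refine mul_le_mul_of_nonneg_left ?_ (abs_nonneg _)
        exact mul_le_mul (hu i) (hv j) (abs_nonneg _) hcu

lemma integral_dot_right {k m : ℕ} (c : Fin k → ℝ) (A : Matrix (Fin k) (Fin m) ℝ)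
    {g : α → Fin m → ℝ} (hg : ∀ j, Integrable (fun x => g x j) μ) :
    ∫ x, c ⬝ᵥ A *ᵥ g x ∂μ = c ⬝ᵥ A *ᵥ (fun j => ∫ x, g x j ∂μ) := by
  simp only [dot_expand]
  rw [integral_finset_sum _ fun i _ => integrable_finset_sum _ fun j _ =>
    ((hg j).const_mul (A i j)).const_mul (c i)]
  refine Finset.sum_congr rfl fun i _ => ?_
  rw [integral_finset_sum _ fun j _ => ((hg j).const_mul (A i j)).const_mul (c i)]
  refine Finset.sum_congr rfl fun j _ => ?_
  rw [integral_const_mul, integral_const_mul]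

lemma integral_dot_left {k m : ℕ} {f : α → Fin k → ℝ} (A : Matrix (Fin k) (Fin m) ℝ)
    (c : Fin m → ℝ) (hf : ∀ i, Integrable (fun x => f x i) μ) :
    ∫ x, f x ⬝ᵥ A *ᵥ c ∂μ = (fun i => ∫ x, f x i ∂μ) ⬝ᵥ A *ᵥ c := by
  simp only [dot_expand]
  rw [integral_finset_sum _ fun i _ => integrable_finset_sum _ fun j _ =>
    (hf i).mul_const (A i j * c j)]
  refine Finset.sum_congr rfl fun i _ => ?_
  rw [integral_finset_sum _ fun j _ => (hf i).mul_const (A i j * c j)]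
  refine Finset.sum_congr rfl fun j _ => ?_
  rw [integral_mul_const]

end SOSaux
set_option maxHeartbeats 1000000 in
open SOSaux in
theorem sos_functional_positivity
    {n k m : ℕ} (a b : ℝ) (hab : a < b)
    (Z₁ : ℝ → Matrix (Fin k) (Fin n) ℝ) (Z₂ : ℝ → ℝ → Matrix (Fin m) (Fin n) ℝ)
    (hZ₁ : ContinuousOn Z₁ (Set.Icc a b))
    (hZ₂ : ContinuousOn (fun p : ℝ × ℝ => Z₂ p.1 p.2) (Set.Icc a b ×ˢ Set.Icc a b))
    (P₁₁ : Matrix (Fin k) (Fin k) ℝ) (P₁₂ : Matrix (Fin k) (Fin m) ℝ)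
    (P₂₂ : Matrix (Fin m) (Fin m) ℝ)
    (hP : (Matrix.fromBlocks P₁₁ P₁₂ P₁₂ᵀ P₂₂).PosSemidef)
    (ε : ℝ) (hε : 0 < ε)
    (M : ℝ → Matrix (Fin n) (Fin n) ℝ)
    (hM : ∀ x, M x = (Z₁ x)ᵀ * P₁₁ * Z₁ x + ε • (1 : Matrix (Fin n) (Fin n) ℝ))
    (N : ℝ → ℝ → Matrix (Fin n) (Fin n) ℝ)
    (hN : ∀ x y, N x y = (Z₁ x)ᵀ * P₁₂ * Z₂ x y + (Z₂ y x)ᵀ * P₁₂ᵀ * Z₁ y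
        + ∫ z in a..b, (Z₂ z x)ᵀ * P₂₂ * Z₂ z y)
    (w : ℝ → Fin n → ℝ)
    (hw : MemLp w 2 (volume.restrict (Set.Ioo a b))) :
    (∫ x in a..b, w x ⬝ᵥ (M x).mulVec (w x))
      + (∫ x in a..b, ∫ y in a..b, w x ⬝ᵥ (N x y).mulVec (w y))
      ≥ ε * ∫ x in a..b, w x ⬝ᵥ w x := by
  have hms : MeasurableSet (Set.Ioo a b) := measurableSet_Ioo
  set μ : Measure ℝ := volume.restrict (Set.Ioo a b) with hμ
  haveI : IsFiniteMeasure μ := by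
    refine ⟨?_⟩
    rw [hμ, Measure.restrict_apply_univ]
    simp [Real.volume_Ioo]
  have hsub : Set.Ioo a b ⊆ Set.Icc a b := Set.Ioo_subset_Icc_self
  -- interval integral conversion
  have hconv : ∀ (f : ℝ → ℝ), (∫ x in a..b, f x) = ∫ x, f x ∂μ := fun f => by
    rw [intervalIntegral.integral_of_le hab.le, hμ, MeasureTheory.integral_Ioc_eq_integral_Ioo]
  have hconvM : ∀ (f : ℝ → Matrix (Fin n) (Fin n) ℝ), (∫ z in a..b, f z) = ∫ z, f z ∂μ :=
    fun f => by
    rw [intervalIntegral.integral_of_le hab.le, hμ, MeasureTheory.integral_Ioc_eq_integral_Ioo]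
  -- ae helpers
  have haeIoo : ∀ (p : ℝ → Prop), (∀ x ∈ Set.Ioo a b, p x) → ∀ᵐ x ∂μ, p x := fun p hp => by
    rw [hμ]; exact (ae_restrict_iff' hms).2 (ae_of_all _ hp)
  have hprodre : μ.prod μ = (volume.prod volume).restrict (Set.Ioo a b ×ˢ Set.Ioo a b) := by
    rw [hμ]; exact Measure.prod_restrict _ _
  have haeIoo2 : ∀ (p : ℝ × ℝ → Prop), (∀ t ∈ (Set.Ioo a b ×ˢ Set.Ioo a b), p t) →
      ∀ᵐ t ∂(μ.prod μ), p t := fun p hp => by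
    rw [hprodre]; exact (ae_restrict_iff' (hms.prod hms)).2 (ae_of_all _ hp)
  have htri : (μ.prod μ).prod μ
      = ((volume.prod volume).prod volume).restrict
          ((Set.Ioo a b ×ˢ Set.Ioo a b) ×ˢ Set.Ioo a b) := by
    rw [hprodre, hμ]; exact Measure.prod_restrict _ _
  have haeIoo3 : ∀ (p : (ℝ × ℝ) × ℝ → Prop),
      (∀ t ∈ ((Set.Ioo a b ×ˢ Set.Ioo a b) ×ˢ Set.Ioo a b), p t) →
      ∀ᵐ t ∂((μ.prod μ).prod μ), p t := fun p hp => by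
    rw [htri]; exact (ae_restrict_iff' ((hms.prod hms).prod hms)).2 (ae_of_all _ hp)
  -- measurability from continuity
  have hmeasIoo : ∀ (f : ℝ → ℝ), ContinuousOn f (Set.Icc a b) → AEStronglyMeasurable f μ :=
    fun f hf => by rw [hμ]; exact (hf.mono hsub).aestronglyMeasurable hms
  have hmeasIoo2 : ∀ (f : ℝ × ℝ → ℝ), ContinuousOn f (Set.Icc a b ×ˢ Set.Icc a b) →
      AEStronglyMeasurable f (μ.prod μ) := fun f hf => by
    rw [hprodre]
    exact (hf.mono (Set.prod_mono hsub hsub)).aestronglyMeasurable (hms.prod hms)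
  -- bounds on Z
  obtain ⟨C₁, hC₁⟩ := IsCompact.exists_bound_of_continuousOn isCompact_Icc hZ₁
  obtain ⟨C₂, hC₂⟩ :=
    IsCompact.exists_bound_of_continuousOn (isCompact_Icc.prod isCompact_Icc) hZ₂
  have haI : a ∈ Set.Icc a b := Set.left_mem_Icc.2 hab.le
  have hC₁0 : 0 ≤ C₁ := le_trans (norm_nonneg _) (hC₁ a haI)
  have hC₂0 : 0 ≤ C₂ := le_trans (norm_nonneg _) (hC₂ (a, a) ⟨haI, haI⟩)
  have hZ₁e : ∀ x ∈ Set.Icc a b, ∀ (i : Fin k) (p : Fin n), |Z₁ x i p| ≤ C₁ := by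
    intro x hx i p
    calc |Z₁ x i p| = ‖Z₁ x i p‖ := (Real.norm_eq_abs _).symm
      _ ≤ ‖Z₁ x‖ := Matrix.norm_entry_le_entrywise_sup_norm (Z₁ x)
      _ ≤ C₁ := hC₁ x hx
  have hZ₂e : ∀ x ∈ Set.Icc a b, ∀ y ∈ Set.Icc a b, ∀ (i : Fin m) (p : Fin n),
      |Z₂ x y i p| ≤ C₂ := by
    intro x hx y hy i p
    calc |Z₂ x y i p| = ‖Z₂ x y i p‖ := (Real.norm_eq_abs _).symm
      _ ≤ ‖Z₂ x y‖ := Matrix.norm_entry_le_entrywise_sup_norm (Z₂ x y)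
      _ ≤ C₂ := hC₂ (x, y) ⟨hx, hy⟩
  -- facts about w
  have hw2 : ∀ p, MemLp (fun x => w x p) 2 μ := fun p => by
    have := (ContinuousLinearMap.proj (R := ℝ) (φ := fun _ : Fin n => ℝ) p).comp_memLp' hw
    rw [hμ]; exact this
  have hwm : ∀ p, AEStronglyMeasurable (fun x => w x p) μ := fun p => (hw2 p).1
  have hwi : ∀ p, Integrable (fun x => w x p) μ := fun p => (hw2 p).integrable one_le_two
  have hwabs : ∀ x p, |w x p| ≤ ‖w x‖ := fun x p => by
    simpa [Real.norm_eq_abs] using norm_le_pi_norm (w x) p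
  have hwn2 : MemLp (fun x => ‖w x‖) 2 μ := by rw [hμ]; exact hw.norm
  have hwnI : Integrable (fun x => ‖w x‖) μ := hwn2.integrable one_le_two
  have hwn0 : ∀ x, 0 ≤ ‖w x‖ := fun x => norm_nonneg _
  -- single variable measurability atoms
  have hev₁ : ∀ (i : Fin k) (p : Fin n), Continuous (fun A : Matrix (Fin k) (Fin n) ℝ => A i p) :=
    fun i p => (continuous_apply p).comp (continuous_apply (A := fun _ : Fin k => Fin n → ℝ) i)
  have hev₂ : ∀ (i : Fin m) (p : Fin n), Continuous (fun A : Matrix (Fin m) (Fin n) ℝ => A i p) :=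
    fun i p => (continuous_apply p).comp (continuous_apply (A := fun _ : Fin m => Fin n → ℝ) i)
  have hmZ₁ : ∀ (i : Fin k) (p : Fin n), AEStronglyMeasurable (fun x => Z₁ x i p) μ :=
    fun i p => hmeasIoo _ ((hev₁ i p).comp_continuousOn hZ₁)
  have hZ₂entC : ∀ (i : Fin m) (p : Fin n),
      ContinuousOn (fun t : ℝ × ℝ => Z₂ t.1 t.2 i p) (Set.Icc a b ×ˢ Set.Icc a b) :=
    fun i p => (hev₂ i p).comp_continuousOn hZ₂
  have hmZ₂l : ∀ c ∈ Set.Icc a b, ∀ (i : Fin m) (p : Fin n),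
      AEStronglyMeasurable (fun x => Z₂ c x i p) μ := fun c hc i p =>
    hmeasIoo _ ((hZ₂entC i p).comp (continuous_const.prodMk continuous_id).continuousOn
      (fun x hx => ⟨hc, hx⟩))
  have hmZ₂r : ∀ c ∈ Set.Icc a b, ∀ (i : Fin m) (p : Fin n),
      AEStronglyMeasurable (fun x => Z₂ x c i p) μ := fun c hc i p =>
    hmeasIoo _ ((hZ₂entC i p).comp (continuous_id.prodMk continuous_const).continuousOn
      (fun x hx => ⟨hx, hc⟩))
  -- MemLp of F and H components
  have hF2 : ∀ i, MemLp (fun x => (Z₁ x *ᵥ w x) i) 2 μ := by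
    intro i
    have hexp : (fun x => (Z₁ x *ᵥ w x) i) = fun x => ∑ p, Z₁ x i p * w x p := by
      funext x; simp [Matrix.mulVec, dotProduct]
    rw [hexp]
    refine memLp_finset_sum _ fun p _ => ?_
    exact bddMulMemℒp (hmZ₁ i p)
      (haeIoo _ (fun x hx => by simpa [Real.norm_eq_abs] using hZ₁e x (hsub hx) i p)) (hw2 p)
  have hH2 : ∀ z ∈ Set.Icc a b, ∀ i, MemLp (fun x => (Z₂ z x *ᵥ w x) i) 2 μ := by
    intro z hz i
    have hexp : (fun x => (Z₂ z x *ᵥ w x) i) = fun x => ∑ p, Z₂ z x i p * w x p := by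
      funext x; simp [Matrix.mulVec, dotProduct]
    rw [hexp]
    refine memLp_finset_sum _ fun p _ => ?_
    exact bddMulMemℒp (hmZ₂l z hz i p)
      (haeIoo _ (fun x hx => by simpa [Real.norm_eq_abs] using hZ₂e z hz x (hsub hx) i p)) (hw2 p)
  have hHx2 : ∀ c ∈ Set.Icc a b, ∀ i, MemLp (fun y => (Z₂ y c *ᵥ w c) i) 2 μ := by
    intro c hc i
    have hexp : (fun y => (Z₂ y c *ᵥ w c) i) = fun y => ∑ p, Z₂ y c i p * w c p := by
      funext y; simp [Matrix.mulVec, dotProduct]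
    rw [hexp]
    refine memLp_finset_sum _ fun p _ => ?_
    have := bddMulMemℒp (f := fun _ : ℝ => w c p) (hmZ₂r c hc i p)
      (haeIoo _ (fun y hy => by simpa [Real.norm_eq_abs] using hZ₂e y (hsub hy) c hc i p))
      (memLp_const _)
    exact this
  have hHxm : ∀ c ∈ Set.Icc a b, ∀ i, AEStronglyMeasurable (fun y => (Z₂ y c *ᵥ w c) i) μ :=
    fun c hc i => (hHx2 c hc i).1
  have hHint : ∀ z ∈ Set.Icc a b, ∀ i, Integrable (fun x => (Z₂ z x *ᵥ w x) i) μ :=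
    fun z hz i => (hH2 z hz i).integrable one_le_two
  -- pointwise bounds on F and H components
  have hFb : ∀ x ∈ Set.Icc a b, ∀ i, |(Z₁ x *ᵥ w x) i| ≤ (n * C₁) * ‖w x‖ := by
    intro x hx i
    have hexp : (Z₁ x *ᵥ w x) i = ∑ p, Z₁ x i p * w x p := by simp [Matrix.mulVec, dotProduct]
    rw [hexp]
    calc |∑ p, Z₁ x i p * w x p| ≤ ∑ p, |Z₁ x i p * w x p| := Finset.abs_sum_le_sum_abs _ _
      _ ≤ ∑ _p : Fin n, C₁ * ‖w x‖ := by
          refine Finset.sum_le_sum fun p _ => ?_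
          rw [abs_mul]
          exact mul_le_mul (hZ₁e x hx i p) (hwabs x p) (abs_nonneg _) hC₁0
      _ = (n * C₁) * ‖w x‖ := by simp [Finset.sum_const]; ring
  have hHb : ∀ z ∈ Set.Icc a b, ∀ x ∈ Set.Icc a b, ∀ i,
      |(Z₂ z x *ᵥ w x) i| ≤ (n * C₂) * ‖w x‖ := by
    intro z hz x hx i
    have hexp : (Z₂ z x *ᵥ w x) i = ∑ p, Z₂ z x i p * w x p := by
      simp [Matrix.mulVec, dotProduct]
    rw [hexp]
    calc |∑ p, Z₂ z x i p * w x p| ≤ ∑ p, |Z₂ z x i p * w x p| := Finset.abs_sum_le_sum_abs _ _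
      _ ≤ ∑ _p : Fin n, C₂ * ‖w x‖ := by
          refine Finset.sum_le_sum fun p _ => ?_
          rw [abs_mul]
          exact mul_le_mul (hZ₂e z hz x hx i p) (hwabs x p) (abs_nonneg _) hC₂0
      _ = (n * C₂) * ‖w x‖ := by simp [Finset.sum_const]; ring
  have hnC₁0 : (0:ℝ) ≤ n * C₁ := by positivity
  have hnC₂0 : (0:ℝ) ≤ n * C₂ := by positivity
  -- the function G
  set G : ℝ → Fin m → ℝ := fun z i => ∫ x, (Z₂ z x *ᵥ w x) i ∂μ with hGdef
  set W : ℝ := ∫ x, ‖w x‖ ∂μ with hW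
  have hW0 : 0 ≤ W := integral_nonneg hwn0
  have hGb : ∀ z ∈ Set.Icc a b, ∀ i, |G z i| ≤ (n * C₂) * W := by
    intro z hz i
    rw [hGdef]
    have h1 : ‖∫ x, (Z₂ z x *ᵥ w x) i ∂μ‖ ≤ ∫ x, (n * C₂) * ‖w x‖ ∂μ := by
      refine norm_integral_le_of_norm_le (hwnI.const_mul _) ?_
      exact haeIoo _ fun x hx => by
        simpa [Real.norm_eq_abs] using hHb z hz x (hsub hx) i
    rw [integral_const_mul] at h1
    simpa [Real.norm_eq_abs] using h1
  -- product-measurability atoms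
  have hHm2' : ∀ i, AEStronglyMeasurable (fun t : ℝ × ℝ => (Z₂ t.1 t.2 *ᵥ w t.2) i) (μ.prod μ) := by
    intro i
    have hexp : (fun t : ℝ × ℝ => (Z₂ t.1 t.2 *ᵥ w t.2) i)
        = fun t => ∑ p, Z₂ t.1 t.2 i p * w t.2 p := by
      funext t; simp [Matrix.mulVec, dotProduct]
    rw [hexp]
    refine Finset.aestronglyMeasurable_fun_sum _ fun p _ => AEStronglyMeasurable.mul ?_ ?_
    · exact hmeasIoo2 _ (hZ₂entC i p)
    · exact (hwm p).comp_snd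
  have hHm2 : ∀ i, AEStronglyMeasurable (fun t : ℝ × ℝ => (Z₂ t.2 t.1 *ᵥ w t.1) i) (μ.prod μ) := by
    intro i
    have hexp : (fun t : ℝ × ℝ => (Z₂ t.2 t.1 *ᵥ w t.1) i)
        = fun t => ∑ p, Z₂ t.2 t.1 i p * w t.1 p := by
      funext t; simp [Matrix.mulVec, dotProduct]
    rw [hexp]
    refine Finset.aestronglyMeasurable_fun_sum _ fun p _ => AEStronglyMeasurable.mul ?_ ?_
    · refine hmeasIoo2 _ ((hZ₂entC i p).comp continuous_swap.continuousOn ?_)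
      exact fun t ht => ⟨ht.2, ht.1⟩
    · exact (hwm p).comp_fst
  have hFm2 : ∀ j, AEStronglyMeasurable (fun t : ℝ × ℝ => (Z₁ t.2 *ᵥ w t.2) j) (μ.prod μ) :=
    fun j => ((hF2 j).1).comp_snd
  -- measurability and MemLp of G
  have hGm : ∀ i, AEStronglyMeasurable (fun z => G z i) μ := by
    intro i
    exact (hHm2' i).integral_prod_right'
  have hG2 : ∀ i, MemLp (fun z => G z i) 2 μ := by
    intro i
    refine (memLp_top_of_bound (hGm i) ((n * C₂) * W) ?_).mono_exponent le_top
    exact haeIoo _ fun z hz => by simpa [Real.norm_eq_abs] using hGb z (hsub hz) i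
  have hGint : ∀ i, Integrable (fun z => G z i) μ := fun i => (hG2 i).integrable one_le_two
  -- pointwise identity for the third term of N
  have he₃ : ∀ x ∈ Set.Ioo a b, ∀ y ∈ Set.Ioo a b,
      w x ⬝ᵥ (∫ z in a..b, (Z₂ z x)ᵀ * P₂₂ * Z₂ z y) *ᵥ w y
        = ∫ z, (Z₂ z x *ᵥ w x) ⬝ᵥ P₂₂ *ᵥ (Z₂ z y *ᵥ w y) ∂μ := by
    intro x hx y hy
    have hxI : x ∈ Set.Icc a b := hsub hx
    have hyI : y ∈ Set.Icc a b := hsub hy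
    set S : ℝ → Matrix (Fin n) (Fin n) ℝ := fun z => (Z₂ z x)ᵀ * P₂₂ * Z₂ z y with hS
    have hSeC : ∀ p q, ContinuousOn (fun z => S z p q) (Set.Icc a b) := by
      intro p q
      have hexp : (fun z => S z p q)
          = fun z => ∑ l, (∑ j, Z₂ z x j p * P₂₂ j l) * Z₂ z y l q := by
        funext z; simp [hS, Matrix.mul_apply, Matrix.transpose_apply]
      rw [hexp]
      refine continuousOn_finset_sum _ fun l _ => ContinuousOn.mul ?_ ?_
      · refine continuousOn_finset_sum _ fun j _ => ContinuousOn.mul ?_ continuousOn_const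
        exact (hZ₂entC j p).comp (continuous_id.prodMk continuous_const).continuousOn
          fun z hz => ⟨hz, hxI⟩
      · exact (hZ₂entC l q).comp (continuous_id.prodMk continuous_const).continuousOn
          fun z hz => ⟨hz, hyI⟩
    have hSc : ContinuousOn S (Set.Icc a b) :=
      continuousOn_pi.2 fun p => continuousOn_pi.2 fun q => hSeC p q
    have hSint : Integrable S μ := by
      rw [hμ]; exact (hSc.integrableOn_Icc).mono_set hsub
    have hSe : ∀ p q, Integrable (fun z => S z p q) μ := by
      intro p q
      rw [hμ]; exact ((hSeC p q).integrableOn_Icc).mono_set hsub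
    have hent : ∀ p q, (∫ z, S z ∂μ) p q = ∫ z, S z p q ∂μ := fun p q =>
      matrix_integral_apply μ S hSint p q
    calc w x ⬝ᵥ (∫ z in a..b, S z) *ᵥ w y
        = w x ⬝ᵥ (∫ z, S z ∂μ) *ᵥ w y := by rw [hconvM]
      _ = ∑ p, ∑ q, w x p * ((∫ z, S z p q ∂μ) * w y q) := by
          rw [dot_expand]
          exact Finset.sum_congr rfl fun p _ => Finset.sum_congr rfl fun q _ => by
            rw [hent p q]
      _ = ∑ p, ∑ q, ∫ z, w x p * (S z p q * w y q) ∂μ := by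
          refine Finset.sum_congr rfl fun p _ => Finset.sum_congr rfl fun q _ => ?_
          rw [integral_const_mul, integral_mul_const]
      _ = ∑ p, ∫ z, ∑ q, w x p * (S z p q * w y q) ∂μ := by
          refine Finset.sum_congr rfl fun p _ => ?_
          exact (integral_finset_sum _ fun q _ =>
            (((hSe p q).mul_const (w y q)).const_mul (w x p))).symm
      _ = ∫ z, ∑ p, ∑ q, w x p * (S z p q * w y q) ∂μ := by
          exact (integral_finset_sum _ fun p _ => integrable_finset_sum _ fun q _ =>
            (((hSe p q).mul_const (w y q)).const_mul (w x p))).symm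
      _ = ∫ z, (Z₂ z x *ᵥ w x) ⬝ᵥ P₂₂ *ᵥ (Z₂ z y *ᵥ w y) ∂μ := by
          refine integral_congr_ae (Filter.Eventually.of_forall fun z => ?_)
          show (∑ p, ∑ q, w x p * (S z p q * w y q))
              = Z₂ z x *ᵥ w x ⬝ᵥ P₂₂ *ᵥ Z₂ z y *ᵥ w y
          rw [← dot_expand (w x) (S z) (w y)]
          simp only [hS]
          exact sandwich _ _ _ _ _
  -- pointwise splitting of the N integrand
  have ψpt : ∀ x ∈ Set.Ioo a b, ∀ y ∈ Set.Ioo a b,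
      w x ⬝ᵥ (N x y) *ᵥ w y
        = (Z₁ x *ᵥ w x) ⬝ᵥ P₁₂ *ᵥ (Z₂ x y *ᵥ w y)
          + ((Z₂ y x *ᵥ w x) ⬝ᵥ P₁₂ᵀ *ᵥ (Z₁ y *ᵥ w y)
            + ∫ z, (Z₂ z x *ᵥ w x) ⬝ᵥ P₂₂ *ᵥ (Z₂ z y *ᵥ w y) ∂μ) := by
    intro x hx y hy
    rw [hN x y, Matrix.add_mulVec, Matrix.add_mulVec, dotProduct_add, dotProduct_add,
      sandwich, sandwich, he₃ x hx y hy]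
    ring
  -- triple-product measurability atoms
  have hmeasIoo3 : ∀ (f : (ℝ × ℝ) × ℝ → ℝ),
      ContinuousOn f ((Set.Icc a b ×ˢ Set.Icc a b) ×ˢ Set.Icc a b) →
      AEStronglyMeasurable f ((μ.prod μ).prod μ) := fun f hf => by
    rw [htri]
    exact (hf.mono (Set.prod_mono (Set.prod_mono hsub hsub) hsub)).aestronglyMeasurable
      ((hms.prod hms).prod hms)
  have hHm3a : ∀ i, AEStronglyMeasurable
      (fun u : (ℝ × ℝ) × ℝ => (Z₂ u.2 u.1.1 *ᵥ w u.1.1) i) ((μ.prod μ).prod μ) := by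
    intro i
    have hexp : (fun u : (ℝ × ℝ) × ℝ => (Z₂ u.2 u.1.1 *ᵥ w u.1.1) i)
        = fun u => ∑ p, Z₂ u.2 u.1.1 i p * w u.1.1 p := by
      funext u; simp [Matrix.mulVec, dotProduct]
    rw [hexp]
    refine Finset.aestronglyMeasurable_fun_sum _ fun p _ => AEStronglyMeasurable.mul ?_ ?_
    · refine hmeasIoo3 _ ((hZ₂entC i p).comp
        (continuous_snd.prodMk (continuous_fst.comp continuous_fst)).continuousOn ?_)
      exact fun u hu => ⟨hu.2, hu.1.1⟩
    · exact ((hwm p).comp_fst).comp_fst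
  have hHm3b : ∀ i, AEStronglyMeasurable
      (fun u : (ℝ × ℝ) × ℝ => (Z₂ u.2 u.1.2 *ᵥ w u.1.2) i) ((μ.prod μ).prod μ) := by
    intro i
    have hexp : (fun u : (ℝ × ℝ) × ℝ => (Z₂ u.2 u.1.2 *ᵥ w u.1.2) i)
        = fun u => ∑ p, Z₂ u.2 u.1.2 i p * w u.1.2 p := by
      funext u; simp [Matrix.mulVec, dotProduct]
    rw [hexp]
    refine Finset.aestronglyMeasurable_fun_sum _ fun p _ => AEStronglyMeasurable.mul ?_ ?_
    · refine hmeasIoo3 _ ((hZ₂entC i p).comp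
        (continuous_snd.prodMk (continuous_snd.comp continuous_fst)).continuousOn ?_)
      exact fun u hu => ⟨hu.2, hu.1.2⟩
    · exact ((hwm p).comp_snd).comp_fst
  -- product integrability
  have hΨ₂ : Integrable (fun t : ℝ × ℝ =>
      (Z₂ t.2 t.1 *ᵥ w t.1) ⬝ᵥ P₁₂ᵀ *ᵥ (Z₁ t.2 *ᵥ w t.2)) (μ.prod μ) := by
    refine Integrable.mono'
      (g := fun t => ((∑ i, ∑ j, |P₁₂ᵀ i j|) * ((n * C₂) * (n * C₁))) * (‖w t.1‖ * ‖w t.2‖))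
      ((hwnI.mul_prod hwnI).const_mul _) (aesm_dot P₁₂ᵀ hHm2 hFm2) ?_
    refine haeIoo2 _ fun t ht => ?_
    rw [Real.norm_eq_abs]
    calc |(Z₂ t.2 t.1 *ᵥ w t.1) ⬝ᵥ P₁₂ᵀ *ᵥ (Z₁ t.2 *ᵥ w t.2)|
        ≤ (∑ i, ∑ j, |P₁₂ᵀ i j|) * (((n * C₂) * ‖w t.1‖) * ((n * C₁) * ‖w t.2‖)) :=
          abs_dot_le _ _ _ (fun i => hHb t.2 (hsub ht.2) t.1 (hsub ht.1) i)
            (fun j => hFb t.2 (hsub ht.2) j)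
            (mul_nonneg hnC₂0 (norm_nonneg _)) (mul_nonneg hnC₁0 (norm_nonneg _))
      _ = ((∑ i, ∑ j, |P₁₂ᵀ i j|) * ((n * C₂) * (n * C₁))) * (‖w t.1‖ * ‖w t.2‖) := by ring
  have hΦ3 : Integrable (fun u : (ℝ × ℝ) × ℝ =>
      (Z₂ u.2 u.1.1 *ᵥ w u.1.1) ⬝ᵥ P₂₂ *ᵥ (Z₂ u.2 u.1.2 *ᵥ w u.1.2)) ((μ.prod μ).prod μ) := by
    refine Integrable.mono'
      (g := fun u => ((∑ i, ∑ j, |P₂₂ i j|) * ((n * C₂) * (n * C₂)))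
        * ((‖w u.1.1‖ * ‖w u.1.2‖) * 1))
      (((hwnI.mul_prod hwnI).mul_prod (integrable_const 1)).const_mul _)
      (aesm_dot P₂₂ hHm3a hHm3b) ?_
    refine haeIoo3 _ fun u hu => ?_
    rw [Real.norm_eq_abs]
    calc |(Z₂ u.2 u.1.1 *ᵥ w u.1.1) ⬝ᵥ P₂₂ *ᵥ (Z₂ u.2 u.1.2 *ᵥ w u.1.2)|
        ≤ (∑ i, ∑ j, |P₂₂ i j|) * (((n * C₂) * ‖w u.1.1‖) * ((n * C₂) * ‖w u.1.2‖)) :=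
          abs_dot_le _ _ _ (fun i => hHb u.2 (hsub hu.2) u.1.1 (hsub hu.1.1) i)
            (fun j => hHb u.2 (hsub hu.2) u.1.2 (hsub hu.1.2) j)
            (mul_nonneg hnC₂0 (norm_nonneg _)) (mul_nonneg hnC₂0 (norm_nonneg _))
      _ = ((∑ i, ∑ j, |P₂₂ i j|) * ((n * C₂) * (n * C₂)))
          * ((‖w u.1.1‖ * ‖w u.1.2‖) * 1) := by ring
  have hΦx : ∀ x ∈ Set.Ioo a b, Integrable (fun t : ℝ × ℝ =>
      (Z₂ t.2 x *ᵥ w x) ⬝ᵥ P₂₂ *ᵥ (Z₂ t.2 t.1 *ᵥ w t.1)) (μ.prod μ) := by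
    intro x hx
    have hxI := hsub hx
    refine Integrable.mono'
      (g := fun t => ((∑ i, ∑ j, |P₂₂ i j|) * (((n * C₂) * ‖w x‖) * (n * C₂)))
        * (‖w t.1‖ * 1))
      (((hwnI.mul_prod (integrable_const 1))).const_mul _)
      (aesm_dot P₂₂ (fun i => (hHxm x hxI i).comp_snd) hHm2) ?_
    refine haeIoo2 _ fun t ht => ?_
    rw [Real.norm_eq_abs]
    calc |(Z₂ t.2 x *ᵥ w x) ⬝ᵥ P₂₂ *ᵥ (Z₂ t.2 t.1 *ᵥ w t.1)|
        ≤ (∑ i, ∑ j, |P₂₂ i j|) * (((n * C₂) * ‖w x‖) * ((n * C₂) * ‖w t.1‖)) :=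
          abs_dot_le _ _ _ (fun i => hHb t.2 (hsub ht.2) x hxI i)
            (fun j => hHb t.2 (hsub ht.2) t.1 (hsub ht.1) j)
            (mul_nonneg hnC₂0 (norm_nonneg _)) (mul_nonneg hnC₂0 (norm_nonneg _))
      _ = ((∑ i, ∑ j, |P₂₂ i j|) * (((n * C₂) * ‖w x‖) * (n * C₂))) * (‖w t.1‖ * 1) := by
          ring
  have hρint : Integrable (fun t : ℝ × ℝ =>
      (Z₂ t.2 t.1 *ᵥ w t.1) ⬝ᵥ P₂₂ *ᵥ G t.2) (μ.prod μ) := by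
    refine Integrable.mono'
      (g := fun t => ((∑ i, ∑ j, |P₂₂ i j|) * ((n * C₂) * ((n * C₂) * W))) * (‖w t.1‖ * 1))
      (((hwnI.mul_prod (integrable_const 1))).const_mul _)
      (aesm_dot P₂₂ hHm2 (fun j => (hGm j).comp_snd)) ?_
    refine haeIoo2 _ fun t ht => ?_
    rw [Real.norm_eq_abs]
    calc |(Z₂ t.2 t.1 *ᵥ w t.1) ⬝ᵥ P₂₂ *ᵥ G t.2|
        ≤ (∑ i, ∑ j, |P₂₂ i j|) * (((n * C₂) * ‖w t.1‖) * ((n * C₂) * W)) :=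
          abs_dot_le _ _ _ (fun i => hHb t.2 (hsub ht.2) t.1 (hsub ht.1) i)
            (fun j => hGb t.2 (hsub ht.2) j)
            (mul_nonneg hnC₂0 (norm_nonneg _)) (mul_nonneg hnC₂0 hW0)
      _ = ((∑ i, ∑ j, |P₂₂ i j|) * ((n * C₂) * ((n * C₂) * W))) * (‖w t.1‖ * 1) := by ring
  -- splitting of the inner integral
  have hSplitInner : ∀ᵐ x ∂μ, (∫ y, w x ⬝ᵥ (N x y) *ᵥ w y ∂μ)
      = (Z₁ x *ᵥ w x) ⬝ᵥ P₁₂ *ᵥ G x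
        + ((∫ y, (Z₂ y x *ᵥ w x) ⬝ᵥ P₁₂ᵀ *ᵥ (Z₁ y *ᵥ w y) ∂μ)
          + ∫ y, (∫ z, (Z₂ z x *ᵥ w x) ⬝ᵥ P₂₂ *ᵥ (Z₂ z y *ᵥ w y) ∂μ) ∂μ) := by
    refine haeIoo _ fun x hx => ?_
    have hxI := hsub hx
    have J₁ : Integrable (fun y => (Z₁ x *ᵥ w x) ⬝ᵥ P₁₂ *ᵥ (Z₂ x y *ᵥ w y)) μ :=
      intDot P₁₂ (fun i => memLp_const _) (hH2 x hxI)
    have J₂ : Integrable (fun y => (Z₂ y x *ᵥ w x) ⬝ᵥ P₁₂ᵀ *ᵥ (Z₁ y *ᵥ w y)) μ :=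
      intDot P₁₂ᵀ (hHx2 x hxI) hF2
    have J₃ : Integrable
        (fun y => ∫ z, (Z₂ z x *ᵥ w x) ⬝ᵥ P₂₂ *ᵥ (Z₂ z y *ᵥ w y) ∂μ) μ :=
      (hΦx x hx).integral_prod_left
    calc (∫ y, w x ⬝ᵥ (N x y) *ᵥ w y ∂μ)
        = ∫ y, ((Z₁ x *ᵥ w x) ⬝ᵥ P₁₂ *ᵥ (Z₂ x y *ᵥ w y)
            + ((Z₂ y x *ᵥ w x) ⬝ᵥ P₁₂ᵀ *ᵥ (Z₁ y *ᵥ w y)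
              + ∫ z, (Z₂ z x *ᵥ w x) ⬝ᵥ P₂₂ *ᵥ (Z₂ z y *ᵥ w y) ∂μ)) ∂μ :=
          integral_congr_ae (haeIoo _ fun y hy => ψpt x hx y hy)
      _ = (∫ y, (Z₁ x *ᵥ w x) ⬝ᵥ P₁₂ *ᵥ (Z₂ x y *ᵥ w y) ∂μ)
            + ((∫ y, (Z₂ y x *ᵥ w x) ⬝ᵥ P₁₂ᵀ *ᵥ (Z₁ y *ᵥ w y) ∂μ)
              + ∫ y, (∫ z, (Z₂ z x *ᵥ w x) ⬝ᵥ P₂₂ *ᵥ (Z₂ z y *ᵥ w y) ∂μ) ∂μ) := by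
          have J₂₃ : Integrable (fun y => (Z₂ y x *ᵥ w x) ⬝ᵥ P₁₂ᵀ *ᵥ (Z₁ y *ᵥ w y)
              + ∫ z, (Z₂ z x *ᵥ w x) ⬝ᵥ P₂₂ *ᵥ (Z₂ z y *ᵥ w y) ∂μ) μ := J₂.add J₃
          rw [integral_add J₁ J₂₃, integral_add J₂ J₃]
      _ = (Z₁ x *ᵥ w x) ⬝ᵥ P₁₂ *ᵥ G x
            + ((∫ y, (Z₂ y x *ᵥ w x) ⬝ᵥ P₁₂ᵀ *ᵥ (Z₁ y *ᵥ w y) ∂μ)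
              + ∫ y, (∫ z, (Z₂ z x *ᵥ w x) ⬝ᵥ P₂₂ *ᵥ (Z₂ z y *ᵥ w y) ∂μ) ∂μ) := by
          rw [integral_dot_right (g := fun y => Z₂ x y *ᵥ w y) (Z₁ x *ᵥ w x) P₁₂ (hHint x hxI)]
  -- evaluating the second term
  have hT₂ : (∫ x, ∫ y, (Z₂ y x *ᵥ w x) ⬝ᵥ P₁₂ᵀ *ᵥ (Z₁ y *ᵥ w y) ∂μ ∂μ)
      = ∫ y, G y ⬝ᵥ P₁₂ᵀ *ᵥ (Z₁ y *ᵥ w y) ∂μ := by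
    rw [MeasureTheory.integral_integral_swap
      (f := fun x y => (Z₂ y x *ᵥ w x) ⬝ᵥ P₁₂ᵀ *ᵥ (Z₁ y *ᵥ w y)) (by exact hΨ₂)]
    refine integral_congr_ae (haeIoo _ fun y hy => ?_)
    exact integral_dot_left (f := fun x => Z₂ y x *ᵥ w x) P₁₂ᵀ (Z₁ y *ᵥ w y) (hHint y (hsub hy))
  -- evaluating the third term
  have hT₃ : (∫ x, ∫ y, (∫ z, (Z₂ z x *ᵥ w x) ⬝ᵥ P₂₂ *ᵥ (Z₂ z y *ᵥ w y) ∂μ) ∂μ ∂μ)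
      = ∫ z, G z ⬝ᵥ P₂₂ *ᵥ G z ∂μ := by
    have hstep1 : ∀ᵐ x ∂μ, (∫ y, (∫ z, (Z₂ z x *ᵥ w x) ⬝ᵥ P₂₂ *ᵥ (Z₂ z y *ᵥ w y) ∂μ) ∂μ)
        = ∫ z, (Z₂ z x *ᵥ w x) ⬝ᵥ P₂₂ *ᵥ G z ∂μ := by
      refine haeIoo _ fun x hx => ?_
      rw [MeasureTheory.integral_integral_swap
        (f := fun y z => (Z₂ z x *ᵥ w x) ⬝ᵥ P₂₂ *ᵥ (Z₂ z y *ᵥ w y)) (by exact hΦx x hx)]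
      refine integral_congr_ae (haeIoo _ fun z hz => ?_)
      exact integral_dot_right (g := fun y => Z₂ z y *ᵥ w y) (Z₂ z x *ᵥ w x) P₂₂ (hHint z (hsub hz))
    calc (∫ x, ∫ y, (∫ z, (Z₂ z x *ᵥ w x) ⬝ᵥ P₂₂ *ᵥ (Z₂ z y *ᵥ w y) ∂μ) ∂μ ∂μ)
        = ∫ x, ∫ z, (Z₂ z x *ᵥ w x) ⬝ᵥ P₂₂ *ᵥ G z ∂μ ∂μ := integral_congr_ae hstep1
      _ = ∫ z, ∫ x, (Z₂ z x *ᵥ w x) ⬝ᵥ P₂₂ *ᵥ G z ∂μ ∂μ := by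
          rw [MeasureTheory.integral_integral_swap
            (f := fun x z => (Z₂ z x *ᵥ w x) ⬝ᵥ P₂₂ *ᵥ G z) (by exact hρint)]
      _ = ∫ z, G z ⬝ᵥ P₂₂ *ᵥ G z ∂μ := by
          refine integral_congr_ae (haeIoo _ fun z hz => ?_)
          exact integral_dot_left (f := fun x => Z₂ z x *ᵥ w x) P₂₂ (G z) (hHint z (hsub hz))
  -- the double integral
  have hB : (∫ x, ∫ y, w x ⬝ᵥ (N x y) *ᵥ w y ∂μ ∂μ)
      = (∫ x, (Z₁ x *ᵥ w x) ⬝ᵥ P₁₂ *ᵥ G x ∂μ)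
        + ((∫ x, G x ⬝ᵥ P₁₂ᵀ *ᵥ (Z₁ x *ᵥ w x) ∂μ) + ∫ z, G z ⬝ᵥ P₂₂ *ᵥ G z ∂μ) := by
    have K₁ : Integrable (fun x => (Z₁ x *ᵥ w x) ⬝ᵥ P₁₂ *ᵥ G x) μ := intDot P₁₂ hF2 hG2
    have K₂ : Integrable (fun x => ∫ y, (Z₂ y x *ᵥ w x) ⬝ᵥ P₁₂ᵀ *ᵥ (Z₁ y *ᵥ w y) ∂μ) μ :=
      hΨ₂.integral_prod_left
    have K₃ : Integrable
        (fun x => ∫ y, (∫ z, (Z₂ z x *ᵥ w x) ⬝ᵥ P₂₂ *ᵥ (Z₂ z y *ᵥ w y) ∂μ) ∂μ) μ :=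
      (hΦ3.integral_prod_left).integral_prod_left
    calc (∫ x, ∫ y, w x ⬝ᵥ (N x y) *ᵥ w y ∂μ ∂μ)
        = ∫ x, ((Z₁ x *ᵥ w x) ⬝ᵥ P₁₂ *ᵥ G x
            + ((∫ y, (Z₂ y x *ᵥ w x) ⬝ᵥ P₁₂ᵀ *ᵥ (Z₁ y *ᵥ w y) ∂μ)
              + ∫ y, (∫ z, (Z₂ z x *ᵥ w x) ⬝ᵥ P₂₂ *ᵥ (Z₂ z y *ᵥ w y) ∂μ) ∂μ)) ∂μ :=
          integral_congr_ae hSplitInner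
      _ = (∫ x, (Z₁ x *ᵥ w x) ⬝ᵥ P₁₂ *ᵥ G x ∂μ)
            + ((∫ x, ∫ y, (Z₂ y x *ᵥ w x) ⬝ᵥ P₁₂ᵀ *ᵥ (Z₁ y *ᵥ w y) ∂μ ∂μ)
              + ∫ x, ∫ y, (∫ z, (Z₂ z x *ᵥ w x) ⬝ᵥ P₂₂ *ᵥ (Z₂ z y *ᵥ w y) ∂μ) ∂μ ∂μ) := by
          have K₂₃ : Integrable (fun x => (∫ y, (Z₂ y x *ᵥ w x) ⬝ᵥ P₁₂ᵀ *ᵥ (Z₁ y *ᵥ w y) ∂μ)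
              + ∫ y, (∫ z, (Z₂ z x *ᵥ w x) ⬝ᵥ P₂₂ *ᵥ (Z₂ z y *ᵥ w y) ∂μ) ∂μ) μ := K₂.add K₃
          rw [integral_add K₁ K₂₃, integral_add K₂ K₃]
      _ = (∫ x, (Z₁ x *ᵥ w x) ⬝ᵥ P₁₂ *ᵥ G x ∂μ)
            + ((∫ x, G x ⬝ᵥ P₁₂ᵀ *ᵥ (Z₁ x *ᵥ w x) ∂μ) + ∫ z, G z ⬝ᵥ P₂₂ *ᵥ G z ∂μ) := by
          rw [hT₂, hT₃]
  -- the single integral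
  have hA : (∫ x, w x ⬝ᵥ (M x) *ᵥ w x ∂μ)
      = (∫ x, (Z₁ x *ᵥ w x) ⬝ᵥ P₁₁ *ᵥ (Z₁ x *ᵥ w x) ∂μ) + ε * ∫ x, w x ⬝ᵥ w x ∂μ := by
    have hww : Integrable (fun x => w x ⬝ᵥ w x) μ := by
      have hexp : (fun x => w x ⬝ᵥ w x) = fun x => ∑ p, w x p * w x p := by
        funext x; simp [dotProduct]
      rw [hexp]; exact integrable_finset_sum _ fun p _ => mulL2 (hw2 p) (hw2 p)
    have hpt : ∀ x, w x ⬝ᵥ (M x) *ᵥ w x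
        = (Z₁ x *ᵥ w x) ⬝ᵥ P₁₁ *ᵥ (Z₁ x *ᵥ w x) + ε * (w x ⬝ᵥ w x) := by
      intro x
      rw [hM x, Matrix.add_mulVec, dotProduct_add, sandwich]
      congr 1
      rw [Matrix.smul_mulVec, Matrix.one_mulVec, dotProduct_smul, smul_eq_mul]
    calc (∫ x, w x ⬝ᵥ (M x) *ᵥ w x ∂μ)
        = ∫ x, ((Z₁ x *ᵥ w x) ⬝ᵥ P₁₁ *ᵥ (Z₁ x *ᵥ w x) + ε * (w x ⬝ᵥ w x)) ∂μ :=
          integral_congr_ae (Filter.Eventually.of_forall hpt)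
      _ = (∫ x, (Z₁ x *ᵥ w x) ⬝ᵥ P₁₁ *ᵥ (Z₁ x *ᵥ w x) ∂μ) + ε * ∫ x, w x ⬝ᵥ w x ∂μ := by
          rw [integral_add (intDot P₁₁ hF2 hF2) (hww.const_mul ε), integral_const_mul]
  -- final assembly
  have hQ1 : Integrable (fun x => (Z₁ x *ᵥ w x) ⬝ᵥ P₁₁ *ᵥ (Z₁ x *ᵥ w x)) μ :=
    intDot P₁₁ hF2 hF2
  have hQ2 : Integrable (fun x => (Z₁ x *ᵥ w x) ⬝ᵥ P₁₂ *ᵥ G x) μ := intDot P₁₂ hF2 hG2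
  have hQ3 : Integrable (fun x => G x ⬝ᵥ P₁₂ᵀ *ᵥ (Z₁ x *ᵥ w x)) μ := intDot P₁₂ᵀ hG2 hF2
  have hQ4 : Integrable (fun x => G x ⬝ᵥ P₂₂ *ᵥ G x) μ := intDot P₂₂ hG2 hG2
  have hQnn : 0 ≤ ∫ x, ((Z₁ x *ᵥ w x) ⬝ᵥ P₁₁ *ᵥ (Z₁ x *ᵥ w x)
      + (Z₁ x *ᵥ w x) ⬝ᵥ P₁₂ *ᵥ G x
      + (G x ⬝ᵥ P₁₂ᵀ *ᵥ (Z₁ x *ᵥ w x) + G x ⬝ᵥ P₂₂ *ᵥ G x)) ∂μ :=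
    integral_nonneg fun x => quadnn hP _ _
  have hQsplit : (∫ x, ((Z₁ x *ᵥ w x) ⬝ᵥ P₁₁ *ᵥ (Z₁ x *ᵥ w x)
      + (Z₁ x *ᵥ w x) ⬝ᵥ P₁₂ *ᵥ G x
      + (G x ⬝ᵥ P₁₂ᵀ *ᵥ (Z₁ x *ᵥ w x) + G x ⬝ᵥ P₂₂ *ᵥ G x)) ∂μ)
      = (∫ x, (Z₁ x *ᵥ w x) ⬝ᵥ P₁₁ *ᵥ (Z₁ x *ᵥ w x) ∂μ)
        + (∫ x, (Z₁ x *ᵥ w x) ⬝ᵥ P₁₂ *ᵥ G x ∂μ)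
        + ((∫ x, G x ⬝ᵥ P₁₂ᵀ *ᵥ (Z₁ x *ᵥ w x) ∂μ) + ∫ x, G x ⬝ᵥ P₂₂ *ᵥ G x ∂μ) := by
    have hQ12 : Integrable (fun x => (Z₁ x *ᵥ w x) ⬝ᵥ P₁₁ *ᵥ (Z₁ x *ᵥ w x)
        + (Z₁ x *ᵥ w x) ⬝ᵥ P₁₂ *ᵥ G x) μ := hQ1.add hQ2
    have hQ34 : Integrable (fun x => G x ⬝ᵥ P₁₂ᵀ *ᵥ (Z₁ x *ᵥ w x) + G x ⬝ᵥ P₂₂ *ᵥ G x) μ :=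
      hQ3.add hQ4
    rw [integral_add hQ12 hQ34, integral_add hQ1 hQ2, integral_add hQ3 hQ4]
  simp only [hconv]
  rw [ge_iff_le, hA, hB]
  linarith [hQnn, hQsplit]
end
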